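/- Let H be a closed, nontrivial m-shift system for f whose kernel is eventually countable, and let W ⊆ X be a set which contains every minimal set of f contained in the core Z_0(H) and which locally divides H, with associated closed shift-invariant set Λ ⊆ Σ_m as in the definition of local division. Suppose Γ ⊆ Σ_m is a shift-minimal set such that h(Γ) > h(Λ) and h(Γ) > h(σ restricted to It(M)) for every minimal set M of f disjoint from W. Then there exists k ∈ ℕ such that every point x ∈ X with It_k(x) ∩ Γ(k) ≠ ∅ satisfies f^{k−1}(x) ∈ W. -/

import Mathlib

open Dynamics

/-- Discrete uniformity on `Fin m`, compatible with its discrete topology. -/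
instance (m : ℕ) : UniformSpace (Fin m) := ⊥

/-- The one-sided shift map on `Σ_m = {1,…,m}^ℕ`, modelled as `ℕ → Fin m`. -/
def shiftMap (m : ℕ) : (ℕ → Fin m) → (ℕ → Fin m) := fun a n => a (n + 1)

variable {X : Type*}

/-- `H = (H_1, …, H_m)` is an `m`-shift system for `f`: each `H i` is nonempty and
`f(H_i) ⊇ H_1 ∪ ⋯ ∪ H_m` for every `i`. -/
def IsShiftSystem (f : X → X) {m : ℕ} (H : Fin m → Set X) : Prop :=
  (∀ i, (H i).Nonempty) ∧ ∀ i, (⋃ j, H j) ⊆ f '' H i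

/-- A closed `m`-shift system: an `m`-shift system all of whose sets are closed. -/
def IsClosedShiftSystem [TopologicalSpace X] (f : X → X) {m : ℕ} (H : Fin m → Set X) : Prop :=
  IsShiftSystem f H ∧ ∀ i, IsClosed (H i)

/-- The itinerary set `It(x)` of a point `x`. -/
def itin (f : X → X) {m : ℕ} (H : Fin m → Set X) (x : X) : Set (ℕ → Fin m) :=
  {a | ∀ i : ℕ, f^[i] x ∈ H (a i)}

/-- The itinerary set `It(S) = ⋃_{x ∈ S} It(x)` of a subset `S ⊆ X`. -/
def itinSet (f : X → X) {m : ℕ} (H : Fin m → Set X) (S : Set X) : Set (ℕ → Fin m) :=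
  ⋃ x ∈ S, itin f H x

/-- The `n`-itinerary set `It_n(x)` of a point `x`. -/
def itinN (f : X → X) {m : ℕ} (H : Fin m → Set X) (n : ℕ) (x : X) : Set (Fin n → Fin m) :=
  {w | ∀ i : Fin n, f^[(i : ℕ)] x ∈ H (w i)}

/-- `A(n)`: the set of initial subwords of length `n` of elements of `A ⊆ Σ_m`. -/
def initWords {m : ℕ} (A : Set (ℕ → Fin m)) (n : ℕ) : Set (Fin n → Fin m) :=
  (fun (a : ℕ → Fin m) (i : Fin n) => a (i : ℕ)) '' A

/-- `π(w) = ⋂_{i<n} f^{-i}(H_{w_i})` for a finite word `w`. -/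
def piWord (f : X → X) {m n : ℕ} (H : Fin m → Set X) (w : Fin n → Fin m) : Set X :=
  ⋂ i : Fin n, f^[(i : ℕ)] ⁻¹' H (w i)

/-- `π(α) = ⋂_{i≥0} f^{-i}(H_{α_i})` for a sequence `α ∈ Σ_m`. -/
def piSeq (f : X → X) {m : ℕ} (H : Fin m → Set X) (α : ℕ → Fin m) : Set X :=
  ⋂ i : ℕ, f^[i] ⁻¹' H (α i)

/-- `π(A) = ⋃_{w ∈ A} π(w)` for a set `A` of `n`-words. -/
def piWordSet (f : X → X) {m n : ℕ} (H : Fin m → Set X) (A : Set (Fin n → Fin m)) : Set X :=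
  ⋃ w ∈ A, piWord f H w

/-- `π(A) = ⋃_{α ∈ A} π(α)` for a set `A ⊆ Σ_m` of sequences. -/
def piSeqSet (f : X → X) {m : ℕ} (H : Fin m → Set X) (A : Set (ℕ → Fin m)) : Set X :=
  ⋃ α ∈ A, piSeq f H α

/-- The center `C(H) = ⋂ i, H i`. -/
def centerSet {m : ℕ} (H : Fin m → Set X) : Set X := ⋂ i, H i

/-- The core `Z_0(H) = ⋂_{k≥0} f^{-k}(C(H))`. -/
def coreSet (f : X → X) {m : ℕ} (H : Fin m → Set X) : Set X :=
  ⋂ k : ℕ, f^[k] ⁻¹' centerSet H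

/-- The domain `D(H) = ⋂_{k≥0} f^{-k}(ℍ)` where `ℍ = H_1 ∪ ⋯ ∪ H_m`. -/
def domainSet (f : X → X) {m : ℕ} (H : Fin m → Set X) : Set X :=
  ⋂ k : ℕ, f^[k] ⁻¹' (⋃ j, H j)

/-- The kernel `Ker(H)`: points lying in at least two of the sets `H i`. -/
def kernelSet {m : ℕ} (H : Fin m → Set X) : Set X :=
  {x | ∃ i j, i ≠ j ∧ x ∈ H i ∧ x ∈ H j}

/-- The kernel of `H` is eventually countable: some image `f^j(Ker(H))` is countable. -/
def EventuallyCountableKernel (f : X → X) {m : ℕ} (H : Fin m → Set X) : Prop :=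
  ∃ j : ℕ, (f^[j] '' kernelSet H).Countable

/-- `H` is nontrivial: `H_i \ Z_0(H) ≠ ∅` for every `i`. -/
def IsNontrivialShiftSystem (f : X → X) {m : ℕ} (H : Fin m → Set X) : Prop :=
  ∀ i, (H i \ coreSet f H).Nonempty

/-- A minimal set of `f`: a nonempty closed invariant set with no proper nonempty closed
invariant subset. -/
def IsMinimalSet [TopologicalSpace X] (f : X → X) (M : Set X) : Prop :=
  M.Nonempty ∧ IsClosed M ∧ f '' M ⊆ M ∧
    ∀ M' : Set X, M' ⊆ M → M'.Nonempty → IsClosed M' → f '' M' ⊆ M' → M' = M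

/-- A shift-minimal subset of `Σ_m`. -/
def IsShiftMinimal {m : ℕ} (Γ : Set (ℕ → Fin m)) : Prop :=
  Γ.Nonempty ∧ IsClosed Γ ∧ shiftMap m '' Γ ⊆ Γ ∧
    ∀ Γ' : Set (ℕ → Fin m), Γ' ⊆ Γ → Γ'.Nonempty → IsClosed Γ' →
      shiftMap m '' Γ' ⊆ Γ' → Γ' = Γ

/-- A periodic orbit of `f`. -/
def IsPeriodicOrbit (f : X → X) (P : Set X) : Prop :=
  ∃ (x : X) (n : ℕ), 0 < n ∧ f^[n] x = x ∧ P = Set.range fun i => f^[i] x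

/-- The virtual entropy `ĥ(S)`: the topological entropy of the shift restricted to `It(S)`. -/
noncomputable def virtualEntropy (f : X → X) {m : ℕ} (H : Fin m → Set X) (S : Set X) : EReal :=
  coverEntropy (shiftMap m) (itinSet f H S)

/-- `W` locally divides the shift system `H`. -/
def LocallyDivides [TopologicalSpace X] (f : X → X) {m : ℕ} (H : Fin m → Set X)
    (W : Set X) : Prop :=
  f '' W ⊆ W ∧ (∀ i, (H i \ W).Nonempty) ∧
    ∃ Λ : Set (ℕ → Fin m), IsClosed Λ ∧ shiftMap m '' Λ ⊆ Λ ∧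
      coverEntropy (shiftMap m) Λ < (Real.log m : EReal) ∧
      ∃ V ∈ nhdsSet W, ∀ (x : X) (n : ℕ), 1 ≤ n →
        (∀ i < n, f^[i] x ∈ V \ W) → itinN f H n x ⊆ initWords Λ n

/-- The ω-limit set of `x` under `f`. -/
def omegaLimitSet [TopologicalSpace X] (f : X → X) (x : X) : Set X :=
  ⋂ N : ℕ, closure (Set.range fun n : ℕ => f^[N + n] x)

/-- `limsup` of a sequence of sets: `⋂_{k≥1} ⋃_{i≥k} A_i`. -/
def limsupSets {β : Type*} (A : ℕ → Set β) : Set β :=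
  ⋂ k : ℕ, ⋃ i : ℕ, ⋃ _ : k ≤ i, A i

open Set Filter Topology

section Helpers

open Dynamics Set Filter Topology

lemma my_coverMincard_mono {Y : Type*} (T : Y → Y) {F G : Set Y} (h : F ⊆ G) (U : Set (Y × Y))
    (n : ℕ) : coverMincard T F U n ≤ coverMincard T G U n :=
  biInf_mono fun _ hs => Set.Subset.trans h hs

lemma my_coverEntropy_mono {Y : Type*} [UniformSpace Y] (T : Y → Y) {F G : Set Y} (h : F ⊆ G) :
    coverEntropy T F ≤ coverEntropy T G := by
  refine iSup₂_mono fun U _ => ?_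
  refine limsup_le_limsup (Eventually.of_forall fun n => ?_)
  exact EReal.monotone_div_right_of_nonneg (b := (n : EReal))
    (by exact_mod_cast EReal.coe_nonneg.2 (Nat.cast_nonneg n))
    (ENNReal.log_monotone (ENat.toENNReal_mono (my_coverMincard_mono T h U n)))

/-- Iterated shift of an element of a shift-invariant set stays in the set. -/
lemma my_shift_iter_mem {m : ℕ} {Γ : Set (ℕ → Fin m)} (hinv : shiftMap m '' Γ ⊆ Γ)
    {a : ℕ → Fin m} (ha : a ∈ Γ) (j : ℕ) : (fun n => a (n + j)) ∈ Γ := by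
  induction j with
  | zero => simpa using ha
  | succ j ih =>
    have : (fun n => a (n + (j + 1))) = shiftMap m (fun n => a (n + j)) := by
      funext n
      simp only [shiftMap]
      congr 1
      omega
    rw [this]
    exact hinv ⟨_, ih, rfl⟩

lemma my_tendsto_of_eventually_coord {m : ℕ} {u : ℕ → ℕ → Fin m} {a : ℕ → Fin m}
    (h : ∀ i, ∀ᶠ t in atTop, u t i = a i) : Tendsto u atTop (𝓝 a) :=
  tendsto_pi_nhds.2 fun i =>
    Tendsto.congr' ((h i).mono fun _ ht => ht.symm) tendsto_const_nhds

lemma my_coord_eventually_eq {m : ℕ} {u : ℕ → ℕ → Fin m} {a : ℕ → Fin m}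
    (h : Tendsto u atTop (𝓝 a)) (i : ℕ) : ∀ᶠ t in atTop, u t i = a i := by
  have h' : Tendsto (fun t => u t i) atTop (𝓝 (a i)) := tendsto_pi_nhds.1 h i
  exact h' ((isOpen_discrete {a i}).mem_nhds rfl)

lemma my_freq_fiber {n₀ : ℕ} {Q : ℕ → ℕ → Prop}
    (h : ∀ᶠ t in (atTop : Filter ℕ), ∃ d < n₀, Q d t) :
    ∃ d < n₀, ∃ᶠ t in (atTop : Filter ℕ), Q d t := by
  by_contra hc
  push_neg at hc
  have hall : ∀ᶠ t in (atTop : Filter ℕ), ∀ d ∈ Finset.range n₀, ¬ Q d t := by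
    rw [Filter.eventually_all_finset]
    intro d hd
    exact hc d (Finset.mem_range.1 hd)
  obtain ⟨t, ⟨d, hd, hQ⟩, hnQ⟩ := (h.and hall).exists
  exact hnQ d (Finset.mem_range.2 hd) hQ

variable {X : Type*}

lemma my_iter_mem_invariant {f : X → X} {W : Set X} (hWinv : f '' W ⊆ W) (n : ℕ) {x : X}
    (hx : x ∈ W) : f^[n] x ∈ W := by
  induction n with
  | zero => simpa using hx
  | succ n ih => rw [Function.iterate_succ_apply']; exact hWinv ⟨_, ih, rfl⟩

lemma my_itin_limit [MetricSpace X] {f : X → X} (hf : Continuous f) {m : ℕ}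
    {H : Fin m → Set X} (hcl : ∀ i, IsClosed (H i)) {y : ℕ → X} {yl : X}
    (hy : Tendsto y atTop (𝓝 yl)) {b : ℕ → (ℕ → Fin m)} {bl : ℕ → Fin m}
    (hb : Tendsto b atTop (𝓝 bl))
    (hmem : ∀ i : ℕ, ∀ᶠ t in atTop, f^[i] (y t) ∈ H (b t i)) :
    ∀ i : ℕ, f^[i] yl ∈ H (bl i) := by
  intro i
  have hev : ∀ᶠ t in atTop, f^[i] (y t) ∈ H (bl i) :=
    ((hmem i).and (my_coord_eventually_eq hb i)).mono fun t ⟨h1, h2⟩ => h2 ▸ h1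
  exact (hcl (bl i)).mem_of_tendsto (((hf.iterate i).tendsto yl).comp hy) hev

/-- Existence of a minimal set inside a nonempty compact invariant set. -/
lemma my_exists_minimal [MetricSpace X] [CompactSpace X] {f : X → X}
    {Ω : Set X} (hne : Ω.Nonempty) (hc : IsClosed Ω) (hinv : f '' Ω ⊆ Ω) :
    ∃ M : Set X, M ⊆ Ω ∧ IsMinimalSet f M := by
  set S : Set (Set X) := {M | M ⊆ Ω ∧ M.Nonempty ∧ IsClosed M ∧ f '' M ⊆ M} with hS
  have hzorn := zorn_superset_nonempty S ?_ Ω ⟨Set.Subset.rfl, hne, hc, hinv⟩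
  · obtain ⟨M, -, hMmin⟩ := hzorn
    obtain ⟨hMΩ, hMne, hMcl, hMinv⟩ := hMmin.prop
    refine ⟨M, hMΩ, hMne, hMcl, hMinv, fun M' hM'M hM'ne hM'cl hM'inv => ?_⟩
    exact Set.Subset.antisymm hM'M
      (hMmin.2 ⟨hM'M.trans hMΩ, hM'ne, hM'cl, hM'inv⟩ hM'M)
  · intro c hcS hchain hcne
    refine ⟨⋂ s ∈ c, s, ⟨?_, ?_, ?_, ?_⟩, fun s hs => biInter_subset_of_mem hs⟩
    · obtain ⟨s, hs⟩ := hcne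
      exact (biInter_subset_of_mem hs).trans (hcS hs).1
    · obtain ⟨t, htc⟩ := hcne
      haveI : Nonempty c := ⟨⟨t, htc⟩⟩
      have hdir : Directed (· ⊇ ·) (fun s : c => (s : Set X)) := by
        intro s s'
        rcases hchain.total s.2 s'.2 with h | h
        · exact ⟨s, Set.Subset.rfl, h⟩
        · exact ⟨s', h, Set.Subset.rfl⟩
      have := IsCompact.nonempty_iInter_of_directed_nonempty_isCompact_isClosed
        (t := fun s : c => (s : Set X)) hdir
        (fun s => (hcS s.2).2.1)
        (fun s => ((hcS s.2).2.2.1).isCompact)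
        (fun s => (hcS s.2).2.2.1)
      rw [Set.nonempty_iff_ne_empty] at this ⊢
      intro hemp
      apply this
      rw [← hemp]
      ext z
      simp [Set.mem_iInter]
    · exact isClosed_biInter fun s hs => (hcS hs).2.2.1
    · intro z hz
      obtain ⟨w, hw, rfl⟩ := hz
      exact Set.mem_iInter₂.2 fun s hs =>
        (hcS hs).2.2.2 ⟨w, Set.mem_iInter₂.1 hw s hs, rfl⟩

lemma my_gamma_subset {m : ℕ} {Γ Λ' : Set (ℕ → Fin m)} (hΓ : IsShiftMinimal Γ)
    (hc : IsClosed Λ') (hinv : shiftMap m '' Λ' ⊆ Λ') (hne : (Γ ∩ Λ').Nonempty) :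
    Γ ⊆ Λ' := by
  have : Γ ∩ Λ' = Γ := by
    refine hΓ.2.2.2 (Γ ∩ Λ') Set.inter_subset_left hne (hΓ.2.1.inter hc) ?_
    intro z hz
    obtain ⟨w, hw, rfl⟩ := hz
    exact ⟨hΓ.2.2.1 ⟨w, hw.1, rfl⟩, hinv ⟨w, hw.2, rfl⟩⟩
  intro a ha
  rw [← this] at ha
  exact ha.2

lemma my_itinSet_closed [MetricSpace X] [CompactSpace X] {f : X → X} (hf : Continuous f)
    {m : ℕ} {H : Fin m → Set X} (hcl : ∀ i, IsClosed (H i)) {M : Set X} (hM : IsClosed M) :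
    IsClosed (itinSet f H M) := by
  refine IsSeqClosed.isClosed ?_
  intro u p hu hup
  choose y hyM hyit using fun t => Set.mem_iUnion₂.1 (hu t)
  obtain ⟨yl, hylM, φ, hφ, hconv⟩ := hM.isCompact.isSeqCompact hyM
  have hmem : ∀ i : ℕ, ∀ᶠ t in atTop, f^[i] ((y ∘ φ) t) ∈ H ((u ∘ φ) t i) :=
    fun i => Eventually.of_forall fun t => hyit (φ t) i
  have : ∀ i, f^[i] yl ∈ H (p i) :=
    my_itin_limit hf hcl hconv (hup.comp hφ.tendsto_atTop) hmem
  exact Set.mem_iUnion₂.2 ⟨yl, hylM, this⟩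

lemma my_itinSet_invariant {f : X → X} {m : ℕ} {H : Fin m → Set X} {M : Set X}
    (hMinv : f '' M ⊆ M) : shiftMap m '' itinSet f H M ⊆ itinSet f H M := by
  rintro _ ⟨a, ha, rfl⟩
  obtain ⟨y, hyM, hy⟩ := Set.mem_iUnion₂.1 ha
  refine Set.mem_iUnion₂.2 ⟨f y, hMinv ⟨y, hyM, rfl⟩, fun i => ?_⟩
  have : f^[i] (f y) = f^[i + 1] y := (Function.iterate_succ_apply f i y).symm
  rw [this]
  exact hy (i + 1)

end Helpers

/-- If `H` satisfies the hypotheses of the main shift-system theorem with locally dividing set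
`W` (with associated `Λ` and `V`), and `Γ ⊆ Σ_m` is shift-minimal with entropy exceeding
`h(Λ)` and the entropy of `It(M)` for every minimal set `M` disjoint from `W`, then there is
`k` such that every `x` with `It_k(x) ∩ Γ(k) ≠ ∅` satisfies `f^{k−1}(x) ∈ W`. -/
theorem exists_time_hits_W_of_gamma_itinerary [MetricSpace X] [CompactSpace X]
    {f : X → X} (hf : Continuous f) {m : ℕ} (hm : 1 ≤ m) {H : Fin m → Set X}
    (hH : IsClosedShiftSystem f H) (hnt : IsNontrivialShiftSystem f H)
    (hker : EventuallyCountableKernel f H)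
    (W : Set X) (hWmin : ∀ M : Set X, IsMinimalSet f M → M ⊆ coreSet f H → M ⊆ W)
    (hWinv : f '' W ⊆ W) (hWne : ∀ i, (H i \ W).Nonempty)
    (Λ : Set (ℕ → Fin m)) (hΛc : IsClosed Λ) (hΛinv : shiftMap m '' Λ ⊆ Λ)
    (hΛent : coverEntropy (shiftMap m) Λ < (Real.log m : EReal))
    (V : Set X) (hV : V ∈ nhdsSet W)
    (hVit : ∀ (x : X) (n : ℕ), 1 ≤ n → (∀ i < n, f^[i] x ∈ V \ W) →
      itinN f H n x ⊆ initWords Λ n)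
    (Γ : Set (ℕ → Fin m)) (hΓ : IsShiftMinimal Γ)
    (hΓΛ : coverEntropy (shiftMap m) Λ < coverEntropy (shiftMap m) Γ)
    (hΓM : ∀ M : Set X, IsMinimalSet f M → Disjoint M W →
      coverEntropy (shiftMap m) (itinSet f H M) < coverEntropy (shiftMap m) Γ) :
    ∃ k : ℕ, 0 < k ∧
      ∀ x : X, (itinN f H k x ∩ initWords Γ k).Nonempty → f^[k - 1] x ∈ W := by
  classical
  by_contra hcon
  push_neg at hcon
  -- extract, for every `k`, a point with a `Γ`-itinerary of length `k+1` whose `k`-th iterate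
  -- avoids `W`
  have hseq : ∀ k : ℕ, ∃ x : X, ∃ γ ∈ Γ, (∀ i ≤ k, f^[i] x ∈ H (γ i)) ∧ f^[k] x ∉ W := by
    intro k
    obtain ⟨x, ⟨w, hwit, hwΓ⟩, hnw⟩ := hcon (k + 1) (Nat.succ_pos k)
    obtain ⟨γ, hγΓ, hγw⟩ := hwΓ
    refine ⟨x, γ, hγΓ, fun i hik => ?_, by simpa using hnw⟩
    have := hwit ⟨i, Nat.lt_succ_of_le hik⟩
    rwa [← congrFun hγw ⟨i, Nat.lt_succ_of_le hik⟩] at this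
  choose x γ hγΓ hitin hnW using hseq
  have hnoW : ∀ k, ∀ i ≤ k, f^[i] (x k) ∉ W := by
    intro k i hik hiW
    apply hnW k
    have : f^[k - i] (f^[i] (x k)) ∈ W := my_iter_mem_invariant hWinv _ hiW
    rwa [← Function.iterate_add_apply, Nat.sub_add_cancel hik] at this
  obtain ⟨U, hUopen, hWU, hUV⟩ := mem_nhdsSet_iff_exists.1 hV
  have hHcl := hH.2
  by_cases hP : ∀ n : ℕ, ∃ k j, j + n ≤ k + 1 ∧ ∀ i < n, f^[j + i] (x k) ∈ U
  · -- Case 1: arbitrarily long orbit blocks inside `U ⊆ V`, avoiding `W`.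
    -- They produce long common prefixes of `Γ` and `Λ`, hence `Γ ⊆ Λ`.
    have hQ : ∀ n : ℕ, ∃ α ∈ Γ, ∃ l ∈ Λ, ∀ i ≤ n, α i = l i := by
      intro n
      obtain ⟨k, j, hjk, hrun⟩ := hP (n + 1)
      set y := f^[j] (x k) with hy
      have hcond : ∀ i < n + 1, f^[i] y ∈ V \ W := by
        intro i hi
        have hik : j + i ≤ k := by omega
        have heq : f^[i] y = f^[j + i] (x k) := by
          rw [hy, ← Function.iterate_add_apply, Nat.add_comm i j]
        refine ⟨?_, ?_⟩
        · rw [heq]; exact hUV (hrun i hi)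
        · rw [heq]; exact hnoW k (j + i) hik
      have hword : (fun i : Fin (n + 1) => γ k (j + (i : ℕ))) ∈ itinN f H (n + 1) y := by
        intro i
        have hik : j + (i : ℕ) ≤ k := by have := i.2; omega
        have heq : f^[(i : ℕ)] y = f^[j + (i : ℕ)] (x k) := by
          rw [hy, ← Function.iterate_add_apply, Nat.add_comm (i : ℕ) j]
        rw [heq]
        exact hitin k (j + (i : ℕ)) hik
      obtain ⟨l, hlΛ, hlw⟩ := hVit y (n + 1) (Nat.succ_le_succ (Nat.zero_le n)) hcond hword
      refine ⟨fun t => γ k (t + j), my_shift_iter_mem hΓ.2.2.1 (hγΓ k) j, l, hlΛ, ?_⟩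
      intro i hin
      have h : l i = γ k (j + i) := congrFun hlw ⟨i, Nat.lt_succ_of_le hin⟩
      show γ k (i + j) = l i
      rw [h]
      congr 1
      omega
    choose αs hαΓ ls hlΛ hagree using hQ
    obtain ⟨α, hαΓ', φ, hφ, hconv⟩ := (hΓ.2.1.isCompact.isSeqCompact) hαΓ
    have hlconv : Tendsto (fun t => ls (φ t)) atTop (𝓝 α) := by
      refine my_tendsto_of_eventually_coord fun i => ?_
      have h1 := my_coord_eventually_eq hconv i
      have h2 : ∀ᶠ t in atTop, (i : ℕ) ≤ φ t :=
        eventually_atTop.2 ⟨i, fun t ht => ht.trans (hφ.le_apply)⟩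
      filter_upwards [h1, h2] with t h1t h2t
      rw [← hagree (φ t) i h2t]
      exact h1t
    have hαΛ : α ∈ Λ :=
      hΛc.mem_of_tendsto hlconv (Eventually.of_forall fun t => hlΛ (φ t))
    have hsub : Γ ⊆ Λ := my_gamma_subset hΓ hΛc hΛinv ⟨α, hαΓ', hαΛ⟩
    exact absurd (my_coverEntropy_mono (shiftMap m) hsub) (not_le.2 hΓΛ)
  · -- Case 2: orbit blocks inside `U` have bounded length `< n₀`.
    push_neg at hP
    obtain ⟨n₀, hn₀⟩ := hP
    have hn₀pos : 0 < n₀ := by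
      rcases Nat.eq_zero_or_pos n₀ with rfl | h
      · obtain ⟨i, hi, -⟩ := hn₀ 0 0 (by omega)
        omega
      · exact h
    -- pass to a simultaneous limit of the points `x k` and the words `γ k`
    obtain ⟨v, -, φ₁, hφ₁, hxconv⟩ := isCompact_univ.isSeqCompact (fun k => Set.mem_univ (x k))
    obtain ⟨β, hβΓ, φ₂, hφ₂, hγconv⟩ := (hΓ.2.1.isCompact.isSeqCompact)
      (fun k => hγΓ (φ₁ k))
    set φ : ℕ → ℕ := φ₁ ∘ φ₂ with hφdef
    have hφ : StrictMono φ := hφ₁.comp hφ₂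
    have hxc : Tendsto (fun t => x (φ t)) atTop (𝓝 v) := hxconv.comp hφ₂.tendsto_atTop
    have hγc : Tendsto (fun t => γ (φ t)) atTop (𝓝 β) := hγconv
    -- `v` has full itinerary `β ∈ Γ`
    have hβit : ∀ i : ℕ, f^[i] v ∈ H (β i) := by
      refine my_itin_limit hf hHcl hxc hγc fun i => ?_
      refine eventually_atTop.2 ⟨i, fun t ht => ?_⟩
      exact hitin (φ t) i (ht.trans hφ.le_apply)
    -- the orbit of `v` leaves `U` syndetically
    have hsynd : ∀ s : ℕ, ∃ d < n₀, f^[s + d] v ∉ U := by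
      intro s
      have hev : ∀ᶠ t in atTop, ∃ d < n₀, f^[s + d] (x (φ t)) ∉ U := by
        refine eventually_atTop.2 ⟨s + n₀, fun t ht => ?_⟩
        obtain ⟨i, hi, hiU⟩ := hn₀ (φ t) s (by
          have h : t ≤ φ t := hφ.le_apply
          omega)
        exact ⟨i, hi, hiU⟩
      obtain ⟨d, hd, hfreq⟩ := my_freq_fiber hev
      refine ⟨d, hd, ?_⟩
      have htd : Tendsto (fun t => f^[s + d] (x (φ t))) atTop (𝓝 (f^[s + d] v)) :=
        ((hf.iterate (s + d)).tendsto v).comp hxc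
      exact hUopen.isClosed_compl.mem_of_frequently_of_tendsto hfreq htd
    -- the ω-limit set of `v`
    set T : ℕ → Set X := fun N => closure (Set.range fun n : ℕ => f^[N + n] v) with hT
    have hTanti : ∀ N, T (N + 1) ⊆ T N := by
      intro N
      apply closure_mono
      rintro _ ⟨n, rfl⟩
      exact ⟨n + 1, by show f^[N + (n + 1)] v = f^[N + 1 + n] v; congr 1; omega⟩
    have hTmono : ∀ N N', N ≤ N' → T N' ⊆ T N := by
      intro N N' h
      induction h with
      | refl => exact Set.Subset.rfl
      | step h ih => exact fun z hz => ih (hTanti _ hz)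
    set Ω : Set X := ⋂ N, T N with hΩ
    -- membership criterion for Ω
    have hmemΩ' : ∀ (mf : ℕ → ℕ), (∀ t, t ≤ mf t) → ∀ q : X,
        Tendsto (fun t => f^[mf t] v) atTop (𝓝 q) → q ∈ Ω := by
      intro mf hmf q hq
      refine Set.mem_iInter.2 fun N => ?_
      refine isClosed_closure.mem_of_tendsto hq ?_
      refine eventually_atTop.2 ⟨N, fun t ht => ?_⟩
      refine subset_closure ⟨mf t - N, ?_⟩
      show f^[N + (mf t - N)] v = f^[mf t] v
      congr 1
      have := hmf t
      omega
    have hmemΩ : ∀ q ∈ Ω, ∃ mf : ℕ → ℕ, (∀ t, t ≤ mf t) ∧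
        Tendsto (fun t => f^[mf t] v) atTop (𝓝 q) := by
      intro q hq
      have hsel : ∀ t : ℕ, ∃ n : ℕ, dist q (f^[t + n] v) < 1 / (t + 1 : ℝ) := by
        intro t
        have hqT : q ∈ T t := Set.mem_iInter.1 hq t
        rw [hT] at hqT
        obtain ⟨b, ⟨n, rfl⟩, hb⟩ := Metric.mem_closure_iff.1 hqT (1 / (t + 1 : ℝ))
          (by positivity)
        exact ⟨n, hb⟩
      choose nt hnt using hsel
      refine ⟨fun t => t + nt t, fun t => Nat.le_add_right t (nt t), ?_⟩
      rw [Metric.tendsto_atTop]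
      intro ε hε
      obtain ⟨N, hN⟩ := exists_nat_one_div_lt hε
      refine ⟨N, fun t ht => ?_⟩
      have h1 : dist (f^[t + nt t] v) q < 1 / (t + 1 : ℝ) := by
        rw [dist_comm]; exact hnt t
      have h2 : (1 : ℝ) / (t + 1) ≤ 1 / (N + 1) := by
        apply one_div_le_one_div_of_le <;> [positivity; exact_mod_cast by omega]
      exact h1.trans_le (h2.trans hN.le)
    have hΩne : Ω.Nonempty := by
      refine IsCompact.nonempty_iInter_of_sequence_nonempty_isCompact_isClosed T hTanti
        (fun N => ⟨f^[N] v, subset_closure ⟨0, by show f^[N + 0] v = f^[N] v; rw [Nat.add_zero]⟩⟩)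
        (isClosed_closure.isCompact) (fun N => isClosed_closure)
    have hΩcl : IsClosed Ω := isClosed_iInter fun N => isClosed_closure
    have hΩinv : f '' Ω ⊆ Ω := by
      rintro _ ⟨q, hq, rfl⟩
      obtain ⟨mf, hmf, hq'⟩ := hmemΩ q hq
      refine hmemΩ' (fun t => mf t + 1) (fun t => (hmf t).trans (Nat.le_succ _)) _ ?_
      have : (fun t => f^[mf t + 1] v) = fun t => f (f^[mf t] v) := by
        funext t; rw [Function.iterate_succ_apply']
      rw [this]
      exact (hf.tendsto q).comp hq'
    -- every point of Ω leaves U within n₀ steps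
    have hPΩ : ∀ q ∈ Ω, ∃ d < n₀, f^[d] q ∉ U := by
      intro q hq
      obtain ⟨mf, hmf, hq'⟩ := hmemΩ q hq
      have hev : ∀ᶠ t in (atTop : Filter ℕ), ∃ d < n₀, f^[d] (f^[mf t] v) ∉ U := by
        refine Eventually.of_forall fun t => ?_
        obtain ⟨d, hd, hdU⟩ := hsynd (mf t)
        refine ⟨d, hd, ?_⟩
        rwa [← Function.iterate_add_apply, Nat.add_comm d (mf t)]
      obtain ⟨d, hd, hfreq⟩ := my_freq_fiber hev
      refine ⟨d, hd, ?_⟩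
      have htd : Tendsto (fun t => f^[d] (f^[mf t] v)) atTop (𝓝 (f^[d] q)) :=
        ((hf.iterate d).tendsto q).comp hq'
      exact hUopen.isClosed_compl.mem_of_frequently_of_tendsto hfreq htd
    -- take a minimal set inside Ω; it is disjoint from W
    obtain ⟨M, hMΩ, hMmin⟩ := my_exists_minimal hΩne hΩcl hΩinv
    have hdisj : Disjoint M W := by
      rw [Set.disjoint_left]
      intro q hqM hqW
      obtain ⟨d, -, hdU⟩ := hPΩ q (hMΩ hqM)
      exact hdU (hWU (my_iter_mem_invariant hWinv d hqW))
    -- a point of M carries an itinerary in Γ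
    obtain ⟨y, hyM⟩ := hMmin.1
    obtain ⟨mf, hmf, hyconv⟩ := hmemΩ y (hMΩ hyM)
    set b : ℕ → (ℕ → Fin m) := fun t => fun n => β (n + mf t) with hb
    have hbΓ : ∀ t, b t ∈ Γ := fun t => my_shift_iter_mem hΓ.2.2.1 hβΓ (mf t)
    obtain ⟨δ, hδΓ, ψ, hψ, hδconv⟩ := (hΓ.2.1.isCompact.isSeqCompact) hbΓ
    have hδit : ∀ i : ℕ, f^[i] y ∈ H (δ i) := by
      refine my_itin_limit hf hHcl (y := fun s => f^[mf (ψ s)] v)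
        (hyconv.comp hψ.tendsto_atTop) hδconv fun i => ?_
      refine Eventually.of_forall fun s => ?_
      have : f^[i] (f^[mf (ψ s)] v) = f^[i + mf (ψ s)] v :=
        (Function.iterate_add_apply f i (mf (ψ s)) v).symm
      rw [this]
      exact hβit (i + mf (ψ s))
    have hδM : δ ∈ itinSet f H M := Set.mem_iUnion₂.2 ⟨y, hyM, hδit⟩
    have hsub : Γ ⊆ itinSet f H M :=
      my_gamma_subset hΓ (my_itinSet_closed hf hHcl hMmin.2.1) (my_itinSet_invariant hMmin.2.2.1)
        ⟨δ, hδΓ, hδM⟩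
    exact absurd (my_coverEntropy_mono (shiftMap m) hsub) (not_le.2 (hΓM M hMmin hdisj))
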